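/- Let h : [n] → [n] be a Hessenberg function and w ∈ S_n with ℓ(w) > ℓ(s_i w), i.e., w^{-1}(i+1) < w^{-1}(i). Define the directed graph G_{w,h} on [n] with edge j → i iff j < i ≤ h(j) and w(j) < w(i). If w^{-1}(i) > h(w^{-1}(i+1)), then E(G_{w,h}) = E(G_{s_i w, h}) and ℓ_h(s_i w) = ℓ_h(w). If instead w^{-1}(i) ≤ h(w^{-1}(i+1)), then E(G_{s_i w, h}) = E(G_{w,h}) ∪ {w^{-1}(i+1) → w^{-1}(i)} and ℓ_h(w) = ℓ_h(s_i w) + 1. -/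

import Mathlib

/-- The edge relation of the graph `G_{w,h}`: an edge j → i iff j < i ≤ h(j) and
w(j) < w(i).  Positions are 0-indexed, and `h` takes 1-indexed values, so the
condition `i ≤ h(j)` reads `(i : ℕ) + 1 ≤ h j`. -/
def hessEdge {n : ℕ} (h : Fin n → ℕ) (w : Equiv.Perm (Fin n)) (p : Fin n × Fin n) : Prop :=
  p.1 < p.2 ∧ (p.2 : ℕ) + 1 ≤ h p.1 ∧ w p.1 < w p.2

/-- ℓ_h(w) = #{(j,i) : j < i ≤ h(j), w(j) > w(i)}. -/
def lenH {n : ℕ} (h : Fin n → ℕ) (w : Equiv.Perm (Fin n)) : ℕ :=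
  (Finset.univ.filter (fun p : Fin n × Fin n =>
    p.1 < p.2 ∧ (p.2 : ℕ) + 1 ≤ h p.1 ∧ w p.2 < w p.1)).card

lemma key_lt {n : ℕ} (i i' : Fin n) (hii : (i : ℕ) + 1 = (i' : ℕ)) (x y : Fin n)
    (h1 : ¬(x = i ∧ y = i')) (h2 : ¬(x = i' ∧ y = i)) :
    Equiv.swap i i' x < Equiv.swap i i' y ↔ x < y := by
  simp only [Equiv.swap_apply_def, Fin.lt_def, Fin.ext_iff] at *
  split_ifs <;> omega

/-- Lemma 4.4: comparison of `G_{w,h}` and `G_{s_i w, h}` when ℓ(w) > ℓ(s_i w). -/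
theorem stmt6 (n : ℕ) (h : Fin n → ℕ) (hmono : Monotone h)
    (hge : ∀ i : Fin n, (i : ℕ) + 1 ≤ h i) (hle : ∀ i : Fin n, h i ≤ n)
    (w : Equiv.Perm (Fin n)) (i : Fin n) (hi : (i : ℕ) + 1 < n)
    (hlen : w⁻¹ ⟨(i : ℕ) + 1, hi⟩ < w⁻¹ i) :
    (h (w⁻¹ ⟨(i : ℕ) + 1, hi⟩) < ((w⁻¹ i : Fin n) : ℕ) + 1 →
      ({p : Fin n × Fin n | hessEdge h w p}
          = {p : Fin n × Fin n | hessEdge h (Equiv.swap i ⟨(i : ℕ) + 1, hi⟩ * w) p}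
        ∧ lenH h (Equiv.swap i ⟨(i : ℕ) + 1, hi⟩ * w) = lenH h w))
    ∧ (((w⁻¹ i : Fin n) : ℕ) + 1 ≤ h (w⁻¹ ⟨(i : ℕ) + 1, hi⟩) →
      ({p : Fin n × Fin n | hessEdge h (Equiv.swap i ⟨(i : ℕ) + 1, hi⟩ * w) p}
          = {p : Fin n × Fin n | hessEdge h w p} ∪ {(w⁻¹ ⟨(i : ℕ) + 1, hi⟩, w⁻¹ i)}
        ∧ lenH h w = lenH h (Equiv.swap i ⟨(i : ℕ) + 1, hi⟩ * w) + 1)) := by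
  set i' : Fin n := ⟨(i : ℕ) + 1, hi⟩ with hi'
  set a := w⁻¹ i' with ha
  set b := w⁻¹ i with hb
  have hab : a < b := hlen
  have hwa : w a = i' := w.apply_symm_apply i'
  have hwb : w b = i := w.apply_symm_apply i
  have hii : i < i' := by simp [hi', Fin.lt_def]
  have hja : ∀ j : Fin n, w j = i' ↔ j = a := by
    intro j; rw [ha, Equiv.Perm.eq_inv_iff_eq]
  have hjb : ∀ j : Fin n, w j = i ↔ j = b := by
    intro j; rw [hb, Equiv.Perm.eq_inv_iff_eq]
  have hcmp : ∀ j k : Fin n, ¬(j = b ∧ k = a) → ¬(j = a ∧ k = b) →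
      ((Equiv.swap i i' * w) j < (Equiv.swap i i' * w) k ↔ w j < w k) := by
    intro j k h1 h2
    simp only [Equiv.Perm.mul_apply]
    exact key_lt i i' rfl (w j) (w k)
      (by rw [hjb, hja]; exact h1) (by rw [hja, hjb]; exact h2)
  have hswa : (Equiv.swap i i' * w) a = i := by
    simp [Equiv.Perm.mul_apply, hwa, Equiv.swap_apply_right]
  have hswb : (Equiv.swap i i' * w) b = i' := by
    simp [Equiv.Perm.mul_apply, hwb, Equiv.swap_apply_left]
  -- pointwise comparison for p ≠ (a,b):
  have hedge : ∀ p : Fin n × Fin n, p ≠ (a, b) →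
      (hessEdge h (Equiv.swap i i' * w) p ↔ hessEdge h w p) := by
    intro p hp
    by_cases hp2 : p = (b, a)
    · subst hp2
      constructor <;> (rintro ⟨h1, -⟩; exact absurd (h1.trans hab) (lt_irrefl _))
    · unfold hessEdge
      rw [hcmp p.1 p.2
        (by intro ⟨e1, e2⟩; exact hp2 (Prod.ext e1 e2))
        (by intro ⟨e1, e2⟩; exact hp (Prod.ext e1 e2))]
  have hinv : ∀ p : Fin n × Fin n, p ≠ (a, b) →
      ((p.1 < p.2 ∧ (p.2 : ℕ) + 1 ≤ h p.1 ∧ (Equiv.swap i i' * w) p.2 < (Equiv.swap i i' * w) p.1)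
        ↔ (p.1 < p.2 ∧ (p.2 : ℕ) + 1 ≤ h p.1 ∧ w p.2 < w p.1)) := by
    intro p hp
    by_cases hp2 : p = (b, a)
    · subst hp2
      constructor <;> (rintro ⟨h1, -⟩; exact absurd (h1.trans hab) (lt_irrefl _))
    · rw [hcmp p.2 p.1
        (by intro ⟨e1, e2⟩; exact hp (Prod.ext e2 e1))
        (by intro ⟨e1, e2⟩; exact hp2 (Prod.ext e2 e1))]
  constructor
  · intro hlt
    constructor
    · ext p
      simp only [Set.mem_setOf_eq]
      by_cases hp : p = (a, b)
      · subst hp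
        unfold hessEdge
        simp only [not_iff_not]
        constructor <;> (rintro ⟨-, h2, -⟩; exact absurd h2 (by omega)) 
      · exact (hedge p hp).symm
    · unfold lenH
      congr 1
      ext p
      simp only [Finset.mem_filter, Finset.mem_univ, true_and]
      by_cases hp : p = (a, b)
      · subst hp
        have hnlt : ¬((b : ℕ) + 1 ≤ h a) := by omega
        constructor <;> (rintro ⟨-, h2, -⟩; exact absurd h2 hnlt)
      · exact hinv p hp
  · intro hle2
    have hmem : hessEdge h (Equiv.swap i i' * w) (a, b) :=
      ⟨hab, hle2, by rw [hswa, hswb]; exact hii⟩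
    constructor
    · ext p
      simp only [Set.mem_setOf_eq, Set.mem_union, Set.mem_singleton_iff]
      by_cases hp : p = (a, b)
      · subst hp
        constructor
        · intro _; exact Or.inr rfl
        · intro _; exact hmem
      · rw [hedge p hp]
        constructor
        · intro hw; left; exact hw
        · rintro (hw | he)
          · exact hw
          · exact absurd he hp
    · have hkey : (Finset.univ.filter (fun p : Fin n × Fin n =>
          p.1 < p.2 ∧ (p.2 : ℕ) + 1 ≤ h p.1 ∧ w p.2 < w p.1))
          = insert (a, b) (Finset.univ.filter (fun p : Fin n × Fin n =>
            p.1 < p.2 ∧ (p.2 : ℕ) + 1 ≤ h p.1 ∧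
              (Equiv.swap i i' * w) p.2 < (Equiv.swap i i' * w) p.1)) := by
        ext p
        simp only [Finset.mem_insert, Finset.mem_filter, Finset.mem_univ, true_and]
        by_cases hp : p = (a, b)
        · subst hp
          simp only [true_or, iff_true]
          exact ⟨hab, hle2, by rw [hwa, hwb]; exact hii⟩
        · rw [hinv p hp]
          constructor
          · intro hw; right; exact hw
          · rintro (he | hw)
            · exact absurd he hp
            · exact hw
      have hnot : (a, b) ∉ (Finset.univ.filter (fun p : Fin n × Fin n =>
          p.1 < p.2 ∧ (p.2 : ℕ) + 1 ≤ h p.1 ∧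
            (Equiv.swap i i' * w) p.2 < (Equiv.swap i i' * w) p.1)) := by
        simp only [Finset.mem_filter, Finset.mem_univ, true_and, not_and]
        intro _ _
        rw [hswa, hswb]
        exact not_lt.2 hii.le
      unfold lenH
      rw [hkey, Finset.card_insert_of_notMem hnot]
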